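/- arXiv:2508.04997 — 4 statements merged into one kernel-verified Lean document; each statement's English description precedes it below -/
import Mathlib

section
/- Let N ≥ 1 be an integer, α ∈ ℝ and β ≥ 0. Define b : ℝ^N → ℝ^N by b_i(x) = α x_i − x_i³ − β(x_i − x̄), where x̄ = (1/N)∑_{j=1}^N x_j. Then for all x, z ∈ ℝ^N: ⟨x − z, b(x) − b(z)⟩ ≤ α|x − z|² − (1/(4N))|x − z|⁴, where |·| is the Euclidean norm and ⟨·,·⟩ the Euclidean inner product. -/
open Finset

/-- Dissipativity of the mean-field drift `b_i(x) = α x_i − x_i³ − β(x_i − x̄)`: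
`⟨x − z, b(x) − b(z)⟩ ≤ α|x − z|² − (1/(4N))|x − z|⁴`. -/
theorem meanfield_drift_dissipative (N : ℕ) (hN : 1 ≤ N) (α β : ℝ) (hβ : 0 ≤ β)
    (b : (Fin N → ℝ) → Fin N → ℝ)
    (hb : ∀ (x : Fin N → ℝ) (i : Fin N),
      b x i = α * x i - (x i) ^ 3 - β * (x i - (∑ j, x j) / N)) :
    ∀ x z : Fin N → ℝ,
      (∑ i, (x i - z i) * (b x i - b z i))
        ≤ α * (∑ i, (x i - z i) ^ 2) - (1 / (4 * N)) * (∑ i, (x i - z i) ^ 2) ^ 2 := by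
  intro x z
  have hN0 : (0 : ℝ) < N := by exact_mod_cast hN
  set d : Fin N → ℝ := fun i => x i - z i with hd
  -- expand the sum
  have expand : (∑ i, (x i - z i) * (b x i - b z i))
      = α * (∑ i, d i ^ 2) - (∑ i, d i * ((x i) ^ 3 - (z i) ^ 3))
        - β * ((∑ i, d i ^ 2) - (∑ i, d i) ^ 2 / N) := by
    have hterm : ∀ i, (x i - z i) * (b x i - b z i)
        = α * d i ^ 2 - d i * ((x i) ^ 3 - (z i) ^ 3)
          - β * (d i ^ 2 - d i * (((∑ j, x j) - (∑ j, z j)) / N)) := by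
      intro i
      rw [hb, hb]
      simp only [hd]
      ring
    rw [Finset.sum_congr rfl fun i _ => hterm i]
    rw [Finset.sum_sub_distrib, Finset.sum_sub_distrib, ← Finset.mul_sum,
      ← Finset.mul_sum, Finset.sum_sub_distrib, ← Finset.sum_mul]
    have : (∑ i, d i) = (∑ j, x j) - (∑ j, z j) := by
      simp [hd, Finset.sum_sub_distrib]
    rw [← this]
    ring
  -- termwise cubic inequality
  have cubic : (∑ i, d i ^ 4) / 4 ≤ ∑ i, d i * ((x i) ^ 3 - (z i) ^ 3) := by
    rw [Finset.sum_div]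
    apply Finset.sum_le_sum
    intro i _
    have h := mul_nonneg (sq_nonneg (x i + z i)) (sq_nonneg (x i - z i))
    simp only [hd]
    nlinarith [h]
  -- power mean inequalities
  have pm1 : (∑ i, d i ^ 2) ^ 2 ≤ N * ∑ i, d i ^ 4 := by
    have := sq_sum_le_card_mul_sum_sq (s := Finset.univ) (f := fun i => d i ^ 2)
    simpa [← pow_mul] using this
  have pm2 : (∑ i, d i) ^ 2 ≤ N * ∑ i, d i ^ 2 := by
    simpa using sq_sum_le_card_mul_sum_sq (s := Finset.univ) (f := d)
  rw [expand]
  have hβterm : 0 ≤ (∑ i, d i ^ 2) - (∑ i, d i) ^ 2 / N := by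
    rw [sub_nonneg, div_le_iff₀ hN0]
    linarith [pm2]
  have h4 : (1 / (4 * (N:ℝ))) * (∑ i, d i ^ 2) ^ 2 ≤ (∑ i, d i ^ 4) / 4 := by
    rw [div_mul_eq_mul_div, one_mul, div_le_div_iff₀ (by positivity) (by norm_num)]
    nlinarith [pm1]
  have := mul_nonneg hβ hβterm
  simp only [hd] at *
  linarith [cubic, h4]
end

section
/- Let N ≥ 1 be an integer and C ≥ 0, ᾱ ≥ 0, β ≥ 0 real constants. Then there exists a constant K > 0 such that for every x ∈ ℝ^N and every α ∈ [0, ᾱ]: C(1 + |x|²) + 2∑_{i=1}^N x_i (α x_i − x_i³ − β(x_i − x̄)) ≤ −(1 + |x|²) + K, where x̄ = (1/N)∑_{j=1}^N x_j and |·| is the Euclidean norm. -/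
open Finset

/-- Lyapunov drift condition for the mean-field model: there is `K > 0` such that
`C(1 + |x|²) + 2∑ᵢ xᵢ(α xᵢ − xᵢ³ − β(xᵢ − x̄)) ≤ −(1 + |x|²) + K`
for all `x ∈ ℝ^N` and all `α ∈ [0, ᾱ]`. -/
theorem meanfield_lyapunov_drift (N : ℕ) (hN : 1 ≤ N) (C αbar β : ℝ)
    (hC : 0 ≤ C) (hαbar : 0 ≤ αbar) (hβ : 0 ≤ β) :
    ∃ K : ℝ, 0 < K ∧ ∀ (x : Fin N → ℝ) (α : ℝ), 0 ≤ α → α ≤ αbar →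
      C * (1 + ∑ i, (x i) ^ 2)
        + 2 * ∑ i, x i * (α * x i - (x i) ^ 3 - β * (x i - (∑ j, x j) / N))
      ≤ -(1 + ∑ i, (x i) ^ 2) + K := by
  refine ⟨C + 1 + N * (C + 2 * αbar + 1) ^ 2, by positivity, fun x α hα hαb => ?_⟩
  have hNR : (0:ℝ) < N := by exact_mod_cast hN
  set S := ∑ i, (x i) ^ 2 with hS
  set Q := ∑ i, (x i) ^ 4 with hQ
  set T := ∑ i, x i with hT
  have hSnn : 0 ≤ S := Finset.sum_nonneg fun i _ => sq_nonneg _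
  have hQnn : 0 ≤ Q := Finset.sum_nonneg fun i _ => by positivity
  have hCS1 : T ^ 2 ≤ N * S := by
    have := sq_sum_le_card_mul_sum_sq (s := Finset.univ) (f := x)
    simpa using this
  have hCS2 : S ^ 2 ≤ N * Q := by
    have := sq_sum_le_card_mul_sum_sq (s := Finset.univ) (f := fun i => (x i) ^ 2)
    simpa [← pow_mul] using this
  have hsum : ∑ i, x i * (α * x i - (x i) ^ 3 - β * (x i - T / N))
      = α * S - Q - β * (S - T ^ 2 / N) := by
    have hpt : ∀ i, x i * (α * x i - (x i) ^ 3 - β * (x i - T / N))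
        = α * (x i) ^ 2 - (x i) ^ 4 - β * (x i) ^ 2 + β * (x i * (T / (N:ℝ))) := fun i => by
      ring
    rw [Finset.sum_congr rfl fun i _ => hpt i]
    rw [Finset.sum_add_distrib, Finset.sum_sub_distrib, Finset.sum_sub_distrib,
      ← Finset.mul_sum, ← Finset.mul_sum, ← Finset.mul_sum, ← Finset.sum_mul]
    rw [← hS, ← hQ, ← hT]
    field_simp
    ring
  rw [hsum]
  have h1 : 0 ≤ β * (S - T ^ 2 / N) := by
    apply mul_nonneg hβ
    have : T ^ 2 / N ≤ S := by
      rw [div_le_iff₀ hNR]; linarith [hCS1]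
    linarith
  have h2 : S ^ 2 / N ≤ Q := by
    rw [div_le_iff₀ hNR]; nlinarith [hCS2]
  have h3 : α * S ≤ αbar * S := mul_le_mul_of_nonneg_right hαb hSnn
  have key0 : (C + 2 * αbar + 1) * S
      ≤ (2 * S ^ 2 + N * (C + 2 * αbar + 1) ^ 2 * N) / N := by
    rw [le_div_iff₀ hNR]
    nlinarith [sq_nonneg ((C + 2 * αbar + 1) * N - 2 * S), sq_nonneg ((C + 2 * αbar + 1) * (N:ℝ)), sq_nonneg S]
  have keq : (2 * S ^ 2 + N * (C + 2 * αbar + 1) ^ 2 * N) / N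
      = 2 * (S ^ 2 / N) + N * (C + 2 * αbar + 1) ^ 2 := by
    field_simp
  rw [keq] at key0
  linarith [h1, h2, h3, key0]
end

section
/- Let a ∈ ℝ and b > 0, and set A(v) = a v² − b v⁴ for v ≥ 0 and f(s) = e^{−A(s)} ∫_s^∞ e^{A(v)} dv for s ≥ 0. Then: (i) for every s ≥ 0 the integral ∫_s^∞ e^{A(v)} dv is finite, so f is well-defined and nonnegative; and (ii) ∫_0^∞ f(s) ds < ∞, i.e., the function G(ρ) = ∫_0^ρ f(s) ds is bounded on [0, ∞). -/
open MeasureTheory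

section Aux

open Set Filter Real Topology

private lemma cfb_integral_exp_neg_mul (c s : ℝ) (hc : 0 < c) :
    ∫ v in Ioi s, Real.exp (-c * v) = Real.exp (-c * s) / c := by
  have hd : ∀ x ∈ Ici s, HasDerivAt (fun x => -Real.exp (-c*x)/c) (Real.exp (-c*x)) x := by
    intro x _
    have h := (((hasDerivAt_id x).const_mul (-c)).exp).neg.div_const c
    convert h using 1
    case e'_9 => field_simp; rfl
    all_goals rfl
  have ht : Tendsto (fun x => -Real.exp (-c*x)/c) atTop (𝓝 (-0/c)) := by
    refine Tendsto.div_const (Tendsto.neg ?_) _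
    exact tendsto_exp_atBot.comp (tendsto_id.const_mul_atTop_of_neg (neg_neg_iff_pos.2 hc))
  have := integral_Ioi_of_hasDerivAt_of_tendsto' hd (exp_neg_integrableOn_Ioi s hc) ht
  rw [this]
  field_simp
  ring

private lemma cfb_key (a b s v : ℝ) (hb : 0 < b) (hs1 : 1 ≤ s) (hab : a ≤ b*s) (hsv : s ≤ v) :
    a*v^2 - b*v^4 ≤ (a*s^2 - b*s^4) - 2*b*s^3*(v - s) := by
  have h2 : a ≤ b*s^2 := by
    nlinarith [mul_nonneg (mul_nonneg hb.le (by linarith : (0:ℝ) ≤ s)) (by linarith : (0:ℝ) ≤ s - 1)]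
  have h3 : b*s^2 ≤ b*v^2 := by
    nlinarith [mul_nonneg hb.le (mul_nonneg (sub_nonneg.2 hsv) (by linarith : (0:ℝ) ≤ v + s))]
  have hB : b*s^2 ≤ b*(v^2+s^2) - a := by linarith
  have hbr : 0 ≤ (v+s)*(b*(v^2+s^2) - a) - 2*b*s^3 := by
    nlinarith [mul_le_mul (by linarith : 2*s ≤ v+s) hB (by positivity) (by linarith : (0:ℝ) ≤ v+s)]
  nlinarith [mul_nonneg (sub_nonneg.2 hsv) hbr]

end Aux

/-- With `A(v) = a v² − b v⁴` (`b > 0`) and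
`f(s) = e^{−A(s)} ∫_s^∞ e^{A(v)} dv`:
(i) the integral `∫_s^∞ e^{A(v)} dv` is finite for every `s ≥ 0`, and `f` is
nonnegative; (ii) `∫_0^∞ f(s) ds < ∞`, i.e. `G(ρ) = ∫_0^ρ f` is bounded. -/
theorem comparison_function_bounded (a b : ℝ) (hb : 0 < b) :
    (∀ s : ℝ, 0 ≤ s →
      IntegrableOn (fun v : ℝ => Real.exp (a * v ^ 2 - b * v ^ 4)) (Set.Ici s)) ∧
    (∀ s : ℝ, 0 ≤ s →
      0 ≤ Real.exp (-(a * s ^ 2 - b * s ^ 4))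
            * ∫ v in Set.Ici s, Real.exp (a * v ^ 2 - b * v ^ 4)) ∧
    IntegrableOn
      (fun s : ℝ => Real.exp (-(a * s ^ 2 - b * s ^ 4))
            * ∫ v in Set.Ici s, Real.exp (a * v ^ 2 - b * v ^ 4))
      (Set.Ici 0) := by
  classical
  set g : ℝ → ℝ := fun v => Real.exp (a * v ^ 2 - b * v ^ 4) with hgdef
  have hgpos : ∀ v, 0 < g v := fun v => Real.exp_pos _
  have hgcont : Continuous g := by
    apply Real.continuous_exp.comp
    continuity
  -- global integrability of g
  have hgint : Integrable g := by
    have h1 : Integrable (fun v : ℝ => Real.exp ((a+1)^2/(4*b)) * Real.exp (-1 * v^2)) :=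
      (integrable_exp_neg_mul_sq one_pos).const_mul _
    refine h1.mono' hgcont.aestronglyMeasurable (ae_of_all _ fun v => ?_)
    rw [Real.norm_eq_abs, abs_of_pos (hgpos v), ← Real.exp_add]
    apply Real.exp_le_exp.2
    have h4b : (0:ℝ) < 4*b := by linarith
    rw [← sub_nonneg]
    have key : 0 ≤ ((a+1) - 2*b*v^2)^2 := sq_nonneg _
    have : (a+1)^2/(4*b) + -1 * v^2 - (a*v^2 - b*v^4)
        = (((a+1) - 2*b*v^2)^2) / (4*b) := by field_simp; ring
    rw [this]
    positivity
  have hint : ∀ s : ℝ, IntegrableOn g (Set.Ici s) := fun s => hgint.integrableOn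
  -- the inner integral, monotone & measurable
  set I : ℝ → ℝ := fun s => ∫ v in Set.Ici s, g v with hIdef
  have hIanti : Antitone I := by
    intro s t hst
    exact setIntegral_mono_set (hint s) (ae_of_all _ fun v => (hgpos v).le)
      (HasSubset.Subset.eventuallyLE (Set.Ici_subset_Ici.2 hst))
  have hInonneg : ∀ s, 0 ≤ I s := fun s =>
    setIntegral_nonneg measurableSet_Ici fun v _ => (hgpos v).le
  refine ⟨fun s _ => hint s, fun s _ => mul_nonneg (Real.exp_pos _).le (hInonneg s), ?_⟩
  set f : ℝ → ℝ := fun s => Real.exp (-(a * s ^ 2 - b * s ^ 4)) * I s with hfdef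
  have hfmeas : Measurable f :=
    (Real.continuous_exp.comp (by continuity)).measurable.mul hIanti.measurable
  have hfnonneg : ∀ s, 0 ≤ f s := fun s => mul_nonneg (Real.exp_pos _).le (hInonneg s)
  -- the threshold
  set s₀ : ℝ := max 1 (a/b) with hs₀def
  have hs₀1 : (1:ℝ) ≤ s₀ := le_max_left _ _
  have hs₀pos : (0:ℝ) < s₀ := lt_of_lt_of_le one_pos hs₀1
  -- bound on the tail
  have htail : ∀ s : ℝ, s₀ ≤ s → f s ≤ (2*b)⁻¹ * s ^ (-3:ℝ) := by
    intro s hs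
    have hs1 : (1:ℝ) ≤ s := le_trans hs₀1 hs
    have hspos : (0:ℝ) < s := lt_of_lt_of_le one_pos hs1
    have hab : a ≤ b * s := by
      have : a / b ≤ s := le_trans (le_max_right _ _) hs
      calc a = b * (a / b) := by field_simp
        _ ≤ b * s := by exact mul_le_mul_of_nonneg_left this hb.le
    set c : ℝ := 2*b*s^3 with hcdef
    have hc : 0 < c := by positivity
    set K : ℝ := Real.exp (a*s^2 - b*s^4 + c*s) with hKdef
    have hbound : ∀ v ∈ Set.Ici s, g v ≤ K * Real.exp (-c * v) := by
      intro v hv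
      rw [hKdef, ← Real.exp_add]
      apply Real.exp_le_exp.2
      simp only [hcdef]
      linarith [cfb_key a b s v hb hs1 hab hv]
    have hKint : IntegrableOn (fun v : ℝ => K * Real.exp (-c * v)) (Set.Ici s) := by
      rw [integrableOn_Ici_iff_integrableOn_Ioi]
      exact (exp_neg_integrableOn_Ioi s hc).const_mul K
    have hIle : I s ≤ K * (Real.exp (-c * s) / c) := by
      have h1 : I s ≤ ∫ v in Set.Ici s, K * Real.exp (-c * v) :=
        setIntegral_mono_on (hint s) hKint measurableSet_Ici hbound
      have h2 : (∫ v in Set.Ici s, K * Real.exp (-c * v))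
          = K * (Real.exp (-c * s) / c) := by
        rw [MeasureTheory.integral_Ici_eq_integral_Ioi, integral_const_mul,
          cfb_integral_exp_neg_mul c s hc]
      linarith [h1, h2 ▸ h1]
    have hfle : f s ≤ c⁻¹ := by
      have : f s ≤ Real.exp (-(a * s ^ 2 - b * s ^ 4)) * (K * (Real.exp (-c * s) / c)) :=
        mul_le_mul_of_nonneg_left hIle (Real.exp_pos _).le
      calc f s ≤ Real.exp (-(a * s ^ 2 - b * s ^ 4)) * (K * (Real.exp (-c * s) / c)) := this
        _ = c⁻¹ := by
            rw [hKdef, div_eq_mul_inv, ← mul_assoc, ← mul_assoc, ← Real.exp_add,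
              ← Real.exp_add]
            rw [show -(a * s ^ 2 - b * s ^ 4) + (a * s ^ 2 - b * s ^ 4 + c * s) + -c * s
              = 0 from by ring, Real.exp_zero, one_mul]
    have hrw : (2*b)⁻¹ * s ^ (-3:ℝ) = c⁻¹ := by
      rw [hcdef]
      rw [Real.rpow_neg hspos.le, show ((3:ℝ) = ((3:ℕ):ℝ)) by norm_num, Real.rpow_natCast]
      rw [mul_inv, ← mul_inv]
      norm_num [mul_assoc]
      ring
    rw [hrw]; exact hfle
  -- integrability on the tail
  have htail_int : IntegrableOn f (Set.Ici s₀) := by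
    have hbint : IntegrableOn (fun s : ℝ => (2*b)⁻¹ * s ^ (-3:ℝ)) (Set.Ici s₀) := by
      rw [integrableOn_Ici_iff_integrableOn_Ioi]
      exact (integrableOn_Ioi_rpow_of_lt (by norm_num) hs₀pos).const_mul _
    refine hbint.mono' (hfmeas.aestronglyMeasurable.restrict) ?_
    rw [ae_restrict_iff' measurableSet_Ici]
    refine ae_of_all _ fun s hs => ?_
    rw [Real.norm_eq_abs, abs_of_nonneg (hfnonneg s)]
    exact htail s hs
  -- integrability on the compact part
  have hcomp_int : IntegrableOn f (Set.Icc 0 s₀) := by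
    have hbcont : Continuous (fun s : ℝ => Real.exp (-(a * s ^ 2 - b * s ^ 4)) * I 0) := by
      exact (Real.continuous_exp.comp (by continuity)).mul continuous_const
    have hbint : IntegrableOn (fun s : ℝ => Real.exp (-(a * s ^ 2 - b * s ^ 4)) * I 0)
        (Set.Icc 0 s₀) := hbcont.integrableOn_Icc
    refine hbint.mono' (hfmeas.aestronglyMeasurable.restrict) ?_
    rw [ae_restrict_iff' measurableSet_Icc]
    refine ae_of_all _ fun s hs => ?_
    rw [Real.norm_eq_abs, abs_of_nonneg (hfnonneg s)]
    exact mul_le_mul_of_nonneg_left (hIanti hs.1) (Real.exp_pos _).le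
  -- combine
  have hsub : Set.Ici (0:ℝ) ⊆ Set.Icc 0 s₀ ∪ Set.Ici s₀ := by
    intro x hx
    by_cases h : x ≤ s₀
    · exact Or.inl ⟨hx, h⟩
    · exact Or.inr (le_of_not_ge h)
  exact (hcomp_int.union htail_int).mono_set hsub
end

section
/- Let a ∈ ℝ and b > 0, and set A(v) = a v² − b v⁴ for v ≥ 0 and f(s) = e^{−A(s)} ∫_s^∞ e^{A(v)} dv for s ≥ 0. Then lim_{s→∞} s³ f(s) = 1/(4b). -/
open MeasureTheory

lemma cfa_integrableOn (a b : ℝ) (hb : 0 < b) :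
    IntegrableOn (fun v : ℝ => Real.exp (a * v ^ 2 - b * v ^ 4)) (Set.Ioi (0:ℝ)) := by
  set R : ℝ := 1 + (|a| + 1) / b with hR
  have hcont : Continuous (fun v : ℝ => Real.exp (a * v ^ 2 - b * v ^ 4)) := by
    fun_prop
  have hR1 : (1:ℝ) ≤ R := by
    have h0 : 0 ≤ (|a| + 1) / b := by positivity
    rw [hR]
    linarith
  have hR0 : (0:ℝ) ≤ R := by linarith
  rw [← Set.Ioc_union_Ioi_eq_Ioi hR0]
  apply MeasureTheory.IntegrableOn.union
  · exact (hcont.continuousOn.integrableOn_Icc).mono_set Set.Ioc_subset_Icc_self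
  · apply MeasureTheory.Integrable.mono' (exp_neg_integrableOn_Ioi R (zero_lt_one))
    · exact hcont.aestronglyMeasurable
    · refine (ae_restrict_iff' measurableSet_Ioi).2 (Filter.Eventually.of_forall ?_)
      intro v hv
      rw [Set.mem_Ioi] at hv
      have hv1 : 1 ≤ v := le_trans hR1 hv.le
      have hvb : (|a| + 1) / b < v := by rw [hR] at hv; linarith
      have hvb' : |a| + 1 < b * v := by
        rw [div_lt_iff₀ hb] at hvb; linarith [hvb]
      have ha1 : a ≤ |a| := le_abs_self a
      rw [Real.norm_eq_abs, Real.abs_exp, Real.exp_le_exp]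
      have hv0 : (0:ℝ) < v := by linarith
      have h1 : (|a| + 1) * v ^ 3 < b * v * v ^ 3 :=
        mul_lt_mul_of_pos_right hvb' (by positivity)
      have h2a : a * v ^ 2 ≤ |a| * v ^ 2 := mul_le_mul_of_nonneg_right ha1 (sq_nonneg v)
      have h2b : v ^ 2 ≤ v ^ 3 := by nlinarith
      have h2c : |a| * v ^ 2 ≤ |a| * v ^ 3 := mul_le_mul_of_nonneg_left h2b (abs_nonneg a)
      have h2 : a * v ^ 2 ≤ |a| * v ^ 3 := le_trans h2a h2c
      have h3 : v ≤ v ^ 3 := by nlinarith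
      nlinarith

set_option maxHeartbeats 1000000 in
/-- With `A(v) = a v² − b v⁴` (`b > 0`) and `f(s) = e^{−A(s)} ∫_s^∞ e^{A(v)} dv`,
one has `lim_{s→∞} s³ f(s) = 1/(4b)`. -/
theorem comparison_function_asymptotics (a b : ℝ) (hb : 0 < b) :
    Filter.Tendsto
      (fun s : ℝ => s ^ 3 * (Real.exp (-(a * s ^ 2 - b * s ^ 4))
        * ∫ v in Set.Ici s, Real.exp (a * v ^ 2 - b * v ^ 4)))
      Filter.atTop (nhds (1 / (4 * b))) := by
  have hcont : Continuous (fun v : ℝ => Real.exp (a * v ^ 2 - b * v ^ 4)) := by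
    fun_prop
  set g : ℝ → ℝ := fun v => Real.exp (a * v ^ 2 - b * v ^ 4) with hgdef
  have hint : IntegrableOn g (Set.Ioi (0:ℝ)) := cfa_integrableOn a b hb
  have hintIci : ∀ s : ℝ, 0 ≤ s → IntegrableOn g (Set.Ici s) := by
    intro s hs
    rw [integrableOn_Ici_iff_integrableOn_Ioi]
    exact hint.mono_set (Set.Ioi_subset_Ioi hs)
  set C : ℝ := ∫ v in Set.Ici (0:ℝ), g v with hCdef
  set N : ℝ → ℝ := fun s => C - ∫ v in (0:ℝ)..s, g v with hNdef
  set φ : ℝ → ℝ := fun s =>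
      (2 * a * s - 4 * b * s ^ 3) * (s ^ 3)⁻¹ + -(3 * s ^ 2) / ((s ^ 3) ^ 2) with hφdef
  set D : ℝ → ℝ := fun s => Real.exp (a * s ^ 2 - b * s ^ 4) * (s ^ 3)⁻¹ with hDdef
  set D' : ℝ → ℝ := fun s => Real.exp (a * s ^ 2 - b * s ^ 4) * φ s with hD'def
  -- N s equals the integral over Ici s, for s ≥ 0
  have hN : ∀ s : ℝ, 0 ≤ s → N s = ∫ v in Set.Ici s, g v := by
    intro s hs
    have hsplit : C = (∫ v in Set.Ico (0:ℝ) s, g v) + ∫ v in Set.Ici s, g v := by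
      rw [hCdef, ← Set.Ico_union_Ici_eq_Ici hs]
      refine MeasureTheory.setIntegral_union ?_ measurableSet_Ici ?_ ?_
      · exact (Set.Iio_disjoint_Ici le_rfl).mono_left Set.Ico_subset_Iio_self
      · exact (hcont.continuousOn.integrableOn_Icc).mono_set Set.Ico_subset_Icc_self
      · exact hintIci s hs
    have hICo : ∫ v in (0:ℝ)..s, g v = ∫ v in Set.Ico (0:ℝ) s, g v := by
      rw [intervalIntegral.integral_of_le hs]
      exact (MeasureTheory.setIntegral_congr_set MeasureTheory.Ico_ae_eq_Ioc).symm
    rw [hNdef]; simp only; rw [hICo, hsplit]; ring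
  -- limit of φ
  have hs2inv : Filter.Tendsto (fun s : ℝ => (s ^ 2)⁻¹) Filter.atTop (nhds 0) :=
    (Filter.tendsto_pow_atTop (two_ne_zero)).inv_tendsto_atTop
  have hs4inv : Filter.Tendsto (fun s : ℝ => (s ^ 4)⁻¹) Filter.atTop (nhds 0) :=
    (Filter.tendsto_pow_atTop (by norm_num)).inv_tendsto_atTop
  have hφtend : Filter.Tendsto φ Filter.atTop (nhds (-(4 * b))) := by
    have h1 : Filter.Tendsto (fun s : ℝ => 2 * a * (s ^ 2)⁻¹ - 4 * b - 3 * (s ^ 4)⁻¹)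
        Filter.atTop (nhds (2 * a * 0 - 4 * b - 3 * 0)) :=
      ((hs2inv.const_mul (2 * a)).sub tendsto_const_nhds).sub (hs4inv.const_mul 3)
    have h2 : (2 * a * 0 - 4 * b - 3 * 0) = -(4 * b) := by ring
    rw [h2] at h1
    refine h1.congr' ?_
    filter_upwards [Filter.eventually_ge_atTop (1:ℝ)] with s hs
    have hs0 : s ≠ 0 := by linarith
    rw [hφdef]
    field_simp
    ring
  have hφneg : ∀ᶠ s in Filter.atTop, φ s < 0 :=
    hφtend.eventually_lt_const (by linarith : -(4 * b) < 0)
  -- derivatives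
  have hNderiv : ∀ s : ℝ, HasDerivAt N (-(g s)) s := by
    intro s
    have := (hcont.integral_hasStrictDerivAt 0 s).hasDerivAt
    exact (this.const_sub C)
  have hDderiv : ∀ s : ℝ, s ≠ 0 → HasDerivAt D (D' s) s := by
    intro s hs0
    have hA : HasDerivAt (fun s : ℝ => a * s ^ 2 - b * s ^ 4)
        (2 * a * s - 4 * b * s ^ 3) s := by
      have h2 : HasDerivAt (fun s : ℝ => a * s ^ 2 - b * s ^ 4) _ s := ((hasDerivAt_pow 2 s).const_mul a).sub ((hasDerivAt_pow 4 s).const_mul b)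
      convert h2 using 1
      push_cast
      ring
    have hexp := hA.exp
    have hinv : HasDerivAt (fun s : ℝ => (s ^ 3)⁻¹)
        (-(3 * s ^ 2) / ((s ^ 3) ^ 2)) s := by
      have h3 : HasDerivAt (fun s : ℝ => (s ^ 3)⁻¹) _ s := (hasDerivAt_pow 3 s).inv (pow_ne_zero 3 hs0)
      convert h3 using 1
      all_goals (push_cast; ring)
    have hmul : HasDerivAt (fun s : ℝ => Real.exp (a * s ^ 2 - b * s ^ 4) * (s ^ 3)⁻¹) _ s :=
      hexp.mul hinv
    rw [hD'def, hφdef]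
    convert hmul using 1
    all_goals (simp only; ring)
  -- tendsto to zero of N
  have hNzero : Filter.Tendsto N Filter.atTop (nhds 0) := by
    have h1 : Filter.Tendsto (fun s : ℝ => ∫ v in (0:ℝ)..s, g v) Filter.atTop
        (nhds (∫ v in Set.Ioi (0:ℝ), g v)) :=
      MeasureTheory.intervalIntegral_tendsto_integral_Ioi 0 hint Filter.tendsto_id
    have h2 : C = ∫ v in Set.Ioi (0:ℝ), g v := MeasureTheory.integral_Ici_eq_integral_Ioi
    have h3 := (tendsto_const_nhds (x := C) (f := Filter.atTop)).sub h1
    rw [← h2, sub_self] at h3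
    exact h3
  -- tendsto to zero of D
  have hAbot : Filter.Tendsto (fun s : ℝ => a * s ^ 2 - b * s ^ 4) Filter.atTop
      Filter.atBot := by
    have hfac : Filter.Tendsto (fun s : ℝ => a * (s ^ 2)⁻¹ - b) Filter.atTop
        (nhds (a * 0 - b)) := (hs2inv.const_mul a).sub tendsto_const_nhds
    have hmb : a * 0 - b < 0 := by linarith
    have h4 : Filter.Tendsto (fun s : ℝ => s ^ 4) Filter.atTop Filter.atTop :=
      Filter.tendsto_pow_atTop (by norm_num)
    have := h4.atTop_mul_neg hmb hfac
    refine this.congr' ?_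
    filter_upwards [Filter.eventually_ge_atTop (1:ℝ)] with s hs
    have hs0 : s ≠ 0 := by linarith
    field_simp
  have hDzero : Filter.Tendsto D Filter.atTop (nhds 0) := by
    have h1 : Filter.Tendsto (fun s : ℝ => Real.exp (a * s ^ 2 - b * s ^ 4)) Filter.atTop
        (nhds 0) := Real.tendsto_exp_atBot.comp hAbot
    have h2 : Filter.Tendsto (fun s : ℝ => (s ^ 3)⁻¹) Filter.atTop (nhds 0) :=
      (Filter.tendsto_pow_atTop (by norm_num)).inv_tendsto_atTop
    have := h1.mul h2
    rw [mul_zero] at this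
    exact this
  -- the limit of the ratio of derivatives
  have hdiv : Filter.Tendsto (fun s => (-(g s)) / D' s) Filter.atTop
      (nhds (1 / (4 * b))) := by
    have h1 : Filter.Tendsto (fun s : ℝ => -(φ s)⁻¹) Filter.atTop
        (nhds (-(-(4 * b))⁻¹)) := (hφtend.inv₀ (by
          have : (0:ℝ) < 4 * b := by linarith
          exact ne_of_lt (by linarith))).neg
    have h2 : -(-(4 * b))⁻¹ = 1 / (4 * b) := by
      rw [one_div]
      rw [← inv_neg]
      simp
    rw [h2] at h1
    refine h1.congr' ?_
    filter_upwards [hφneg] with s hφs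
    have hexpne : Real.exp (a * s ^ 2 - b * s ^ 4) ≠ 0 := (Real.exp_pos _).ne'
    rw [hD'def, hgdef]
    simp only
    rw [neg_div, div_mul_eq_div_div, div_self hexpne, one_div, neg_inv]
  -- apply L'Hôpital
  have hmain : Filter.Tendsto (fun s => N s / D s) Filter.atTop (nhds (1 / (4 * b))) := by
    refine HasDerivAt.lhopital_zero_atTop (f' := fun s => -(g s)) (g' := D')
      ?_ ?_ ?_ hNzero hDzero hdiv
    · exact Filter.Eventually.of_forall (fun s => hNderiv s)
    · filter_upwards [Filter.eventually_ge_atTop (1:ℝ)] with s hs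
      exact hDderiv s (by linarith)
    · filter_upwards [hφneg] with s hφs
      exact (mul_neg_of_pos_of_neg (Real.exp_pos _) hφs).ne
  refine hmain.congr' ?_
  filter_upwards [Filter.eventually_ge_atTop (1:ℝ)] with s hs
  have hs0 : s ≠ 0 := by linarith
  rw [hN s (by linarith), hDdef]
  simp only
  rw [Real.exp_neg, div_eq_mul_inv, mul_inv, inv_inv]
  ring
end
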